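/- Let P_S and P_T be domains on ℝ^d × {−1,1} such that x ≠ 0 almost surely under both marginals, let D_T be the marginal of P_T on ℝ^d, and let A ⊆ ℝ^d × {−1,1} be a measurable set with P_S(Aᶜ) = 0 such that the restriction of P_T to A is absolutely continuous with respect to P_S with density ρ; let β_∞ be the P_S-essential supremum of ρ and η_{T∖S} = P_T(Aᶜ)·sup_{w'∈ℝ^d} R_{T∖S}(h_{w'}) (zero when P_T(Aᶜ)=0), where T∖S is the conditional of P_T given Aᶜ. For w ∈ ℝ^d, suppose D_T({x : w·x = 0}) = 0 and P_S({(x,y) : w·x = 0}) = 0. Then: R_{P_T}(h_w) ≤ d_{D_T}(Q_w) + 2·β_∞·e_{P_S}(Q_w) + 2·η_{T∖S}, where d_{D_T}(Q_w) = E_{x∼D_T} P_{(w',w'')∼N(w,I_d)⊗N(w,I_d)}( sgn(w'·x) ≠ sgn(w''·x) ) and e_{P_S}(Q_w) = E_{(x,y)∼P_S} P_{(w',w'')∼N(w,I_d)⊗N(w,I_d)}( sgn(w'·x) ≠ y and sgn(w''·x) ≠ y ). -/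

import Mathlib

/-!
STATEMENT 6: Domain adaptation bound specialized to linear classifiers
(Corollary 7 of the paper).  `ℝ^d` is `Fin d → ℝ`; `Y = {-1,1}` is `Bool`
(`true ↔ +1`, `false ↔ -1`); `h_w(x) = sgn(w·x)` is `linSgn (dot w x)` with the
(immaterial) convention `sgn 0 = -1`; the Gaussian posterior `Q_w = N(w, I_d)`
is the product of one-dimensional unit-variance Gaussians.
-/

open MeasureTheory ProbabilityTheory Real
open scoped ENNReal Classical

noncomputable section

/-- Dot product on `ℝ^d`. -/
def dot {d : ℕ} (w x : Fin d → ℝ) : ℝ := ∑ i, w i * x i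

/-- Sign, as a Boolean label (`true ↔ +1`). -/
def linSgn (t : ℝ) : Bool := decide (0 < t)

/-- The Gaussian measure `N(w, I_d)` on `ℝ^d`. -/
def gaussPi {d : ℕ} (w : Fin d → ℝ) : Measure (Fin d → ℝ) :=
  Measure.pi fun i => gaussianReal (w i) 1

section Helpers

variable {d : ℕ}

lemma measurable_dot : Measurable fun p : (Fin d → ℝ) × (Fin d → ℝ) => dot p.1 p.2 := by
  unfold dot
  exact Finset.measurable_sum _ fun i _ =>
    (((measurable_pi_apply i).comp measurable_fst).mul
      ((measurable_pi_apply i).comp measurable_snd))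

lemma measurable_dot_left (x : Fin d → ℝ) : Measurable fun v : Fin d → ℝ => dot v x :=
  measurable_dot.comp (measurable_id.prodMk measurable_const)

lemma measurableSet_wrong : MeasurableSet {q : ℝ × Bool | linSgn q.1 ≠ q.2} := by
  have : {q : ℝ × Bool | linSgn q.1 ≠ q.2}
      = ({t : ℝ | 0 < t} ×ˢ ({false} : Set Bool)) ∪ ({t : ℝ | ¬ 0 < t} ×ˢ ({true} : Set Bool)) := by
    ext ⟨t, y⟩
    cases y <;> by_cases h : 0 < t <;> simp [linSgn, h, not_lt] <;> linarith
  rw [this]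
  exact ((measurableSet_Ioi.prod (measurableSet_singleton _))).union
    ((measurableSet_Ioi.compl).prod (measurableSet_singleton _))

lemma measurableSet_dis : MeasurableSet {q : ℝ × ℝ | linSgn q.1 ≠ linSgn q.2} := by
  have : {q : ℝ × ℝ | linSgn q.1 ≠ linSgn q.2}
      = ({t : ℝ | 0 < t} ×ˢ {t : ℝ | ¬ 0 < t}) ∪ ({t : ℝ | ¬ 0 < t} ×ˢ {t : ℝ | 0 < t}) := by
    ext ⟨s, t⟩
    by_cases hs : 0 < s <;> by_cases ht : 0 < t <;> simp [linSgn, hs, ht, not_lt] <;> linarith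
  rw [this]
  exact (measurableSet_Ioi.prod measurableSet_Ioi.compl).union
    (measurableSet_Ioi.compl.prod measurableSet_Ioi)

instance gaussPi_prob (w : Fin d → ℝ) : IsProbabilityMeasure (gaussPi w) := by
  unfold gaussPi; infer_instance

lemma gaussPi_reflect (w : Fin d → ℝ) :
    MeasurePreserving (fun v i => 2 * w i - v i) (gaussPi w) (gaussPi w) := by
  apply measurePreserving_pi
  intro i
  refine ⟨(measurable_const.sub measurable_id), ?_⟩
  have h1 : (HSub.hSub (2 * w i) : ℝ → ℝ) = (fun s : ℝ => s + 2 * w i) ∘ (fun t : ℝ => (-1) * t) := by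
    funext t; simp; ring
  rw [h1, ← Measure.map_map (by fun_prop) (by fun_prop)]
  rw [gaussianReal_map_const_mul (-1)]
  rw [gaussianReal_map_add_const (2 * w i)]
  norm_num
  congr 1
  ring

lemma dot_reflect (w v x : Fin d → ℝ) :
    dot (fun i => 2 * w i - v i) x = 2 * dot w x - dot v x := by
  unfold dot
  rw [Finset.mul_sum, ← Finset.sum_sub_distrib]
  exact Finset.sum_congr rfl fun i _ => by ring

lemma measurableSet_agree (x : Fin d → ℝ) (b : Bool) :
    MeasurableSet {v : Fin d → ℝ | linSgn (dot v x) = b} := by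
  cases b
  · have : {v : Fin d → ℝ | linSgn (dot v x) = false} = (fun v => dot v x) ⁻¹' {t | ¬ 0 < t} := by
      ext v; simp [linSgn]
    rw [this]; exact measurable_dot_left x measurableSet_Ioi.compl
  · have : {v : Fin d → ℝ | linSgn (dot v x) = true} = (fun v => dot v x) ⁻¹' {t | 0 < t} := by
      ext v; simp [linSgn]
    rw [this]; exact measurable_dot_left x measurableSet_Ioi

lemma gauss_flip_le_half (w x : Fin d → ℝ) (hc : dot w x ≠ 0) :
    gaussPi w {v | linSgn (dot v x) ≠ linSgn (dot w x)} ≤ 1/2 := by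
  set G := gaussPi w with hG
  set r : (Fin d → ℝ) → (Fin d → ℝ) := fun v i => 2 * w i - v i with hr
  have hrp := gaussPi_reflect w
  set S : Set (Fin d → ℝ) := {v | linSgn (dot v x) ≠ linSgn (dot w x)} with hS
  have hSm : MeasurableSet S := by
    have : S = {v : Fin d → ℝ | linSgn (dot v x) = !(linSgn (dot w x))} := by
      ext v; simp [hS, Bool.eq_not_iff]
    rw [this]; exact measurableSet_agree x _
  have hmapS : G (r ⁻¹' S) = G S := by
    have h := Measure.map_apply (μ := gaussPi w) hrp.measurable hSm
    rw [hrp.map_eq] at h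
    exact h.symm
  have hdisj : Disjoint S (r ⁻¹' S) := by
    rw [Set.disjoint_left]
    intro v hv hv'
    have h1 : linSgn (dot v x) ≠ linSgn (dot w x) := hv
    have h2 : linSgn (dot (r v) x) ≠ linSgn (dot w x) := hv'
    rw [hr] at h2
    rw [dot_reflect] at h2
    rcases lt_or_gt_of_ne hc with hneg | hpos
    · have hb : linSgn (dot w x) = false := by simp [linSgn, not_lt.mpr hneg.le]
      rw [hb] at h1 h2
      have h1' : 0 < dot v x := by
        by_contra h; exact h1 (by simp [linSgn, h])
      have h2' : 0 < 2 * dot w x - dot v x := by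
        by_contra h; exact h2 (by simp [linSgn, h])
      linarith
    · have hb : linSgn (dot w x) = true := by simp [linSgn, hpos]
      rw [hb] at h1 h2
      have h1' : ¬ 0 < dot v x := by
        intro h; exact h1 (by simp [linSgn, h])
      have h2' : ¬ 0 < 2 * dot w x - dot v x := by
        intro h; exact h2 (by simp [linSgn, h])
      have := not_lt.mp h1'
      have := not_lt.mp h2'
      linarith
  have hsum : G S + G S ≤ 1 := by
    calc G S + G S = G S + G (r ⁻¹' S) := by rw [hmapS]
    _ = G (S ∪ r ⁻¹' S) := (measure_union hdisj (hrp.measurable hSm)).symm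
    _ ≤ 1 := prob_le_one
  rw [ENNReal.le_div_iff_mul_le (Or.inl two_ne_zero) (Or.inl ENNReal.ofNat_ne_top)]
  rw [mul_comm, two_mul]
  exact hsum

lemma pointwise_bound (w x : Fin d → ℝ) (y : Bool) (hc : dot w x ≠ 0)
    (hy : linSgn (dot w x) ≠ y) :
    (1 : ℝ≥0∞) ≤ ((gaussPi w).prod (gaussPi w)) {p | linSgn (dot p.1 x) ≠ linSgn (dot p.2 x)}
      + 2 * ((gaussPi w).prod (gaussPi w))
          {p | linSgn (dot p.1 x) ≠ y ∧ linSgn (dot p.2 x) ≠ y} := by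
  set G := gaussPi w with hG
  set ν := G.prod G with hν
  set b := linSgn (dot w x) with hb
  set B : Set (Fin d → ℝ) := {v | linSgn (dot v x) = b} with hB
  have hBm : MeasurableSet B := measurableSet_agree x b
  have hcompl : Bᶜ = {v : Fin d → ℝ | linSgn (dot v x) ≠ b} := rfl
  have hq : G Bᶜ ≤ 1/2 := gauss_flip_le_half w x hc
  have hqB : G Bᶜ ≤ G B := by
    have hsum : G Bᶜ + G B = 1 := by
      rw [add_comm, measure_add_measure_compl hBm, measure_univ]
    have h2 : G Bᶜ + G Bᶜ ≤ G Bᶜ + G B := by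
      rw [hsum]
      calc G Bᶜ + G Bᶜ ≤ 1/2 + 1/2 := add_le_add hq hq
      _ = 1 := ENNReal.add_halves 1
    exact (ENNReal.add_le_add_iff_left (ne_top_of_le_ne_top ENNReal.one_ne_top prob_le_one)).mp h2
  have hcover : (Set.univ : Set ((Fin d → ℝ) × (Fin d → ℝ)))
      ⊆ {p | linSgn (dot p.1 x) ≠ linSgn (dot p.2 x)} ∪ (B ×ˢ B ∪ Bᶜ ×ˢ Bᶜ) := by
    rintro ⟨u, v⟩ -
    by_cases h1 : linSgn (dot u x) = b <;> by_cases h2 : linSgn (dot v x) = b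
    · exact Or.inr (Or.inl ⟨h1, h2⟩)
    · exact Or.inl (by simp only [Set.mem_setOf_eq]; rw [h1]; exact fun h => h2 h.symm)
    · exact Or.inl (by simp only [Set.mem_setOf_eq]; rw [h2]; exact h1)
    · exact Or.inr (Or.inr ⟨h1, h2⟩)
  have h1 : (1 : ℝ≥0∞) ≤ ν {p | linSgn (dot p.1 x) ≠ linSgn (dot p.2 x)}
      + (ν (B ×ˢ B) + ν (Bᶜ ×ˢ Bᶜ)) := by
    calc (1 : ℝ≥0∞) = ν Set.univ := (measure_univ).symm
    _ ≤ ν ({p | linSgn (dot p.1 x) ≠ linSgn (dot p.2 x)} ∪ (B ×ˢ B ∪ Bᶜ ×ˢ Bᶜ)) :=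
        measure_mono hcover
    _ ≤ ν {p | linSgn (dot p.1 x) ≠ linSgn (dot p.2 x)} + ν (B ×ˢ B ∪ Bᶜ ×ˢ Bᶜ) :=
        measure_union_le _ _
    _ ≤ _ := add_le_add_right (measure_union_le _ _) _
  have hflip : ν (Bᶜ ×ˢ Bᶜ) ≤ ν (B ×ˢ B) := by
    rw [hν, Measure.prod_prod, Measure.prod_prod]
    exact mul_le_mul' hqB hqB
  have hBB : ν (B ×ˢ B) ≤ ν {p | linSgn (dot p.1 x) ≠ y ∧ linSgn (dot p.2 x) ≠ y} := by
    apply measure_mono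
    rintro ⟨u, v⟩ ⟨hu, hv⟩
    exact ⟨by rw [Set.mem_setOf_eq] at hu; rw [hu]; exact hy,
           by rw [Set.mem_setOf_eq] at hv; rw [hv]; exact hy⟩
  calc (1 : ℝ≥0∞) ≤ ν {p | linSgn (dot p.1 x) ≠ linSgn (dot p.2 x)}
        + (ν (B ×ˢ B) + ν (Bᶜ ×ˢ Bᶜ)) := h1
  _ ≤ ν {p | linSgn (dot p.1 x) ≠ linSgn (dot p.2 x)}
        + (ν (B ×ˢ B) + ν (B ×ˢ B)) := add_le_add_right (add_le_add_right hflip _) _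
  _ = ν {p | linSgn (dot p.1 x) ≠ linSgn (dot p.2 x)} + 2 * ν (B ×ˢ B) := by
        rw [two_mul]
  _ ≤ _ := add_le_add_right (mul_le_mul_right hBB 2) _

lemma measurable_dot_right (w : Fin d → ℝ) : Measurable fun x : Fin d → ℝ => dot w x :=
  measurable_dot.comp (measurable_const.prodMk measurable_id)

lemma measurableSet_SD :
    MeasurableSet {q : (Fin d → ℝ) × ((Fin d → ℝ) × (Fin d → ℝ)) |
      linSgn (dot q.2.1 q.1) ≠ linSgn (dot q.2.2 q.1)} := by
  have hf : Measurable fun q : (Fin d → ℝ) × ((Fin d → ℝ) × (Fin d → ℝ)) =>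
      (dot q.2.1 q.1, dot q.2.2 q.1) :=
    (measurable_dot.comp ((measurable_fst.comp measurable_snd).prodMk measurable_fst)).prodMk
      (measurable_dot.comp ((measurable_snd.comp measurable_snd).prodMk measurable_fst))
  exact hf measurableSet_dis

lemma measurableSet_SE :
    MeasurableSet {q : ((Fin d → ℝ) × Bool) × ((Fin d → ℝ) × (Fin d → ℝ)) |
      linSgn (dot q.2.1 q.1.1) ≠ q.1.2 ∧ linSgn (dot q.2.2 q.1.1) ≠ q.1.2} := by
  have hf : Measurable fun q : ((Fin d → ℝ) × Bool) × ((Fin d → ℝ) × (Fin d → ℝ)) =>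
      ((dot q.2.1 q.1.1, q.1.2), (dot q.2.2 q.1.1, q.1.2)) :=
    ((measurable_dot.comp ((measurable_fst.comp measurable_snd).prodMk
        (measurable_fst.comp measurable_fst))).prodMk
      (measurable_snd.comp measurable_fst)).prodMk
    ((measurable_dot.comp ((measurable_snd.comp measurable_snd).prodMk
        (measurable_fst.comp measurable_fst))).prodMk
      (measurable_snd.comp measurable_fst))
  exact hf (measurableSet_wrong.prod measurableSet_wrong)

lemma measurableSet_SW (w' : Fin d → ℝ) :
    MeasurableSet {z : (Fin d → ℝ) × Bool | linSgn (dot w' z.1) ≠ z.2} := by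
  have hf : Measurable fun z : (Fin d → ℝ) × Bool => (dot w' z.1, z.2) :=
    ((measurable_dot_right w').comp measurable_fst).prodMk measurable_snd
  exact hf measurableSet_wrong

lemma measurableSet_SWcond :
    MeasurableSet {q : ((Fin d → ℝ) × Bool) × (Fin d → ℝ) |
      linSgn (dot q.2 q.1.1) ≠ q.1.2} := by
  have hf : Measurable fun q : ((Fin d → ℝ) × Bool) × (Fin d → ℝ) => (dot q.2 q.1.1, q.1.2) :=
    (measurable_dot.comp (measurable_snd.prodMk (measurable_fst.comp measurable_fst))).prodMk
      (measurable_snd.comp measurable_fst)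
  exact hf measurableSet_wrong

end Helpers

theorem domain_adaptation_bound_linear
    {d : ℕ}
    (PS PT : Measure ((Fin d → ℝ) × Bool)) [IsProbabilityMeasure PS] [IsProbabilityMeasure PT]
    (hS0 : ∀ᵐ z ∂PS, z.1 ≠ 0) (hT0 : ∀ᵐ z ∂PT, z.1 ≠ 0)
    (A : Set ((Fin d → ℝ) × Bool)) (hA : MeasurableSet A) (hSA : PS Aᶜ = 0)
    (ρ : (Fin d → ℝ) × Bool → ℝ≥0∞) (hρ : Measurable ρ)
    (hdens : PT.restrict A = PS.withDensity ρ)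
    (w : Fin d → ℝ)
    (hwT : (PT.map Prod.fst) {x | dot w x = 0} = 0)
    (hwS : PS {z | dot w z.1 = 0} = 0) :
    -- R_{P_T}(h_w) ≤ d_{D_T}(Q_w) + 2 β_∞ e_{P_S}(Q_w) + 2 η_{T∖S}
    ENNReal.ofReal (PT {z | linSgn (dot w z.1) ≠ z.2}).toReal
      ≤ ENNReal.ofReal (∫ x, (((gaussPi w).prod (gaussPi w))
            {p | linSgn (dot p.1 x) ≠ linSgn (dot p.2 x)}).toReal ∂(PT.map Prod.fst))
        + 2 * essSup ρ PS
            * ENNReal.ofReal (∫ z, (((gaussPi w).prod (gaussPi w))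
                {p | linSgn (dot p.1 z.1) ≠ z.2 ∧ linSgn (dot p.2 z.1) ≠ z.2}).toReal ∂PS)
        + ENNReal.ofReal (2 * ((PT Aᶜ).toReal *
            ⨆ w' : Fin d → ℝ, ((PT[|Aᶜ]) {z | linSgn (dot w' z.1) ≠ z.2}).toReal)) := by
  classical
  set ν := (gaussPi w).prod (gaussPi w) with hν
  have hνprob : IsProbabilityMeasure ν := by rw [hν]; infer_instance
  -- measurability of the two parametric measure-valued maps
  have hDmeas : Measurable fun x : Fin d → ℝ =>
      ν {p | linSgn (dot p.1 x) ≠ linSgn (dot p.2 x)} :=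
    measurable_measure_prodMk_left (ν := ν) measurableSet_SD
  have hEmeas : Measurable fun z : (Fin d → ℝ) × Bool =>
      ν {p | linSgn (dot p.1 z.1) ≠ z.2 ∧ linSgn (dot p.2 z.1) ≠ z.2} :=
    measurable_measure_prodMk_left (ν := ν) measurableSet_SE
  have hDT : IsProbabilityMeasure (PT.map Prod.fst) :=
    Measure.isProbabilityMeasure_map measurable_fst.aemeasurable
  -- convert the Bochner integrals to lower Lebesgue integrals
  have hDint : ENNReal.ofReal (∫ x, (ν {p | linSgn (dot p.1 x) ≠ linSgn (dot p.2 x)}).toReal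
        ∂(PT.map Prod.fst))
      = ∫⁻ x, ν {p | linSgn (dot p.1 x) ≠ linSgn (dot p.2 x)} ∂(PT.map Prod.fst) := by
    rw [integral_toReal hDmeas.aemeasurable (ae_of_all _ fun x => measure_lt_top ν _)]
    refine ENNReal.ofReal_toReal (ne_top_of_le_ne_top ENNReal.one_ne_top ?_)
    calc ∫⁻ x, ν {p | linSgn (dot p.1 x) ≠ linSgn (dot p.2 x)} ∂(PT.map Prod.fst)
        ≤ ∫⁻ _, 1 ∂(PT.map Prod.fst) := lintegral_mono fun x => prob_le_one
    _ = 1 := by simp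
  have hEint : ENNReal.ofReal (∫ z, (ν {p | linSgn (dot p.1 z.1) ≠ z.2
          ∧ linSgn (dot p.2 z.1) ≠ z.2}).toReal ∂PS)
      = ∫⁻ z, ν {p | linSgn (dot p.1 z.1) ≠ z.2 ∧ linSgn (dot p.2 z.1) ≠ z.2} ∂PS := by
    rw [integral_toReal hEmeas.aemeasurable (ae_of_all _ fun z => measure_lt_top ν _)]
    refine ENNReal.ofReal_toReal (ne_top_of_le_ne_top ENNReal.one_ne_top ?_)
    calc ∫⁻ z, ν {p | linSgn (dot p.1 z.1) ≠ z.2 ∧ linSgn (dot p.2 z.1) ≠ z.2} ∂PS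
        ≤ ∫⁻ _, 1 ∂PS := lintegral_mono fun z => prob_le_one
    _ = 1 := by simp
  rw [hDint, hEint, ENNReal.ofReal_toReal (measure_ne_top PT _)]
  -- a.e. nonvanishing of dot w z.1 under PT
  have haez : ∀ᵐ z ∂PT, dot w z.1 ≠ 0 := by
    have h0 : PT {z | dot w z.1 = 0} = 0 := by
      have hms : MeasurableSet {x : Fin d → ℝ | dot w x = 0} :=
        measurable_dot_right w (measurableSet_singleton (0:ℝ))
      rw [Measure.map_apply measurable_fst hms] at hwT
      exact hwT
    rw [ae_iff]
    simpa using h0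
  -- main pointwise step
  have key : PT {z | linSgn (dot w z.1) ≠ z.2}
      ≤ (∫⁻ x, ν {p | linSgn (dot p.1 x) ≠ linSgn (dot p.2 x)} ∂(PT.map Prod.fst))
        + 2 * ∫⁻ z, ν {p | linSgn (dot p.1 z.1) ≠ z.2 ∧ linSgn (dot p.2 z.1) ≠ z.2} ∂PT := by
    rw [← lintegral_indicator_one (measurableSet_SW w)]
    have hmono : ∀ᵐ z ∂PT,
        Set.indicator {z : (Fin d → ℝ) × Bool | linSgn (dot w z.1) ≠ z.2}
            (fun _ => (1:ℝ≥0∞)) z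
          ≤ ν {p | linSgn (dot p.1 z.1) ≠ linSgn (dot p.2 z.1)}
            + 2 * ν {p | linSgn (dot p.1 z.1) ≠ z.2 ∧ linSgn (dot p.2 z.1) ≠ z.2} := by
      filter_upwards [haez] with z hz
      by_cases hzS : z ∈ {z : (Fin d → ℝ) × Bool | linSgn (dot w z.1) ≠ z.2}
      · rw [Set.indicator_of_mem hzS]
        exact pointwise_bound w z.1 z.2 hz hzS
      · rw [Set.indicator_of_notMem hzS]
        exact zero_le
    calc ∫⁻ z : (Fin d → ℝ) × Bool, Set.indicator {z : (Fin d → ℝ) × Bool | linSgn (dot w z.1) ≠ z.2}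
            (fun _ => (1:ℝ≥0∞)) z ∂PT
        ≤ ∫⁻ z : (Fin d → ℝ) × Bool, (ν {p | linSgn (dot p.1 z.1) ≠ linSgn (dot p.2 z.1)}
            + 2 * ν {p | linSgn (dot p.1 z.1) ≠ z.2 ∧ linSgn (dot p.2 z.1) ≠ z.2}) ∂PT :=
          lintegral_mono_ae hmono
    _ = (∫⁻ z, ν {p | linSgn (dot p.1 z.1) ≠ linSgn (dot p.2 z.1)} ∂PT)
          + ∫⁻ z, 2 * ν {p | linSgn (dot p.1 z.1) ≠ z.2 ∧ linSgn (dot p.2 z.1) ≠ z.2} ∂PT :=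
        lintegral_add_left (hDmeas.comp measurable_fst) _
    _ = (∫⁻ x, ν {p | linSgn (dot p.1 x) ≠ linSgn (dot p.2 x)} ∂(PT.map Prod.fst))
          + 2 * ∫⁻ z, ν {p | linSgn (dot p.1 z.1) ≠ z.2 ∧ linSgn (dot p.2 z.1) ≠ z.2} ∂PT := by
        rw [lintegral_map hDmeas measurable_fst, lintegral_const_mul 2 hEmeas]
  -- split the PT-integral of the joint error over A and Aᶜ
  have hsplit : ∫⁻ z, ν {p | linSgn (dot p.1 z.1) ≠ z.2 ∧ linSgn (dot p.2 z.1) ≠ z.2} ∂PT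
      = (∫⁻ z in A, ν {p | linSgn (dot p.1 z.1) ≠ z.2 ∧ linSgn (dot p.2 z.1) ≠ z.2} ∂PT)
        + ∫⁻ z in Aᶜ, ν {p | linSgn (dot p.1 z.1) ≠ z.2 ∧ linSgn (dot p.2 z.1) ≠ z.2} ∂PT :=
    (lintegral_add_compl _ hA).symm
  have hAbound : (∫⁻ z in A, ν {p | linSgn (dot p.1 z.1) ≠ z.2 ∧ linSgn (dot p.2 z.1) ≠ z.2} ∂PT)
      ≤ essSup ρ PS * ∫⁻ z, ν {p | linSgn (dot p.1 z.1) ≠ z.2 ∧ linSgn (dot p.2 z.1) ≠ z.2} ∂PS := by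
    rw [show PT.restrict A = PS.withDensity ρ from hdens,
      lintegral_withDensity_eq_lintegral_mul _ hρ hEmeas]
    calc ∫⁻ z : (Fin d → ℝ) × Bool, (ρ * fun z : (Fin d → ℝ) × Bool =>
            ν {p | linSgn (dot p.1 z.1) ≠ z.2 ∧ linSgn (dot p.2 z.1) ≠ z.2}) z ∂PS
        ≤ ∫⁻ z : (Fin d → ℝ) × Bool, essSup ρ PS * ν {p | linSgn (dot p.1 z.1) ≠ z.2 ∧ linSgn (dot p.2 z.1) ≠ z.2} ∂PS := by
          apply lintegral_mono_ae
          filter_upwards [ae_le_essSup (f := ρ) (μ := PS)] with z hz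
          exact mul_le_mul_left hz _
    _ = essSup ρ PS * ∫⁻ z, ν {p | linSgn (dot p.1 z.1) ≠ z.2 ∧ linSgn (dot p.2 z.1) ≠ z.2} ∂PS :=
        lintegral_const_mul _ hEmeas
  have hTail : 2 * (∫⁻ z in Aᶜ, ν {p | linSgn (dot p.1 z.1) ≠ z.2 ∧ linSgn (dot p.2 z.1) ≠ z.2} ∂PT)
      ≤ ENNReal.ofReal (2 * ((PT Aᶜ).toReal *
          ⨆ w' : Fin d → ℝ, ((PT[|Aᶜ]) {z | linSgn (dot w' z.1) ≠ z.2}).toReal)) := by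
    by_cases hTA : PT Aᶜ = 0
    · rw [Measure.restrict_eq_zero.mpr hTA]
      simp
    · set M := ⨆ w' : Fin d → ℝ, ((PT[|Aᶜ]) {z | linSgn (dot w' z.1) ≠ z.2}).toReal with hM
      have hcondP : IsProbabilityMeasure (PT[|Aᶜ]) := cond_isProbabilityMeasure hTA
      have hMbdd : BddAbove (Set.range fun w' : Fin d → ℝ =>
          ((PT[|Aᶜ]) {z | linSgn (dot w' z.1) ≠ z.2}).toReal) := by
        refine ⟨1, ?_⟩
        rintro _ ⟨w', rfl⟩
        refine ENNReal.toReal_le_of_le_ofReal zero_le_one ?_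
        simpa using (prob_le_one (μ := PT[|Aᶜ]) (s := {z | linSgn (dot w' z.1) ≠ z.2}))
      have hrestrict : PT.restrict Aᶜ = (PT Aᶜ) • (PT[|Aᶜ]) := by
        rw [ProbabilityTheory.cond, smul_smul,
          ENNReal.mul_inv_cancel hTA (measure_ne_top PT _), one_smul]
      have hcondle : (∫⁻ z, ν {p | linSgn (dot p.1 z.1) ≠ z.2 ∧ linSgn (dot p.2 z.1) ≠ z.2} ∂(PT[|Aᶜ]))
          ≤ ENNReal.ofReal M := by
        have hEG : ∀ z : (Fin d → ℝ) × Bool,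
            ν {p | linSgn (dot p.1 z.1) ≠ z.2 ∧ linSgn (dot p.2 z.1) ≠ z.2}
              ≤ gaussPi w {v | linSgn (dot v z.1) ≠ z.2} := by
          intro z
          have hsub : {p : (Fin d → ℝ) × (Fin d → ℝ) |
                linSgn (dot p.1 z.1) ≠ z.2 ∧ linSgn (dot p.2 z.1) ≠ z.2}
              ⊆ {v : Fin d → ℝ | linSgn (dot v z.1) ≠ z.2} ×ˢ Set.univ := fun p hp => ⟨hp.1, trivial⟩
          calc ν {p | linSgn (dot p.1 z.1) ≠ z.2 ∧ linSgn (dot p.2 z.1) ≠ z.2}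
              ≤ ν ({v : Fin d → ℝ | linSgn (dot v z.1) ≠ z.2} ×ˢ Set.univ) := measure_mono hsub
          _ = gaussPi w {v | linSgn (dot v z.1) ≠ z.2} := by
              rw [hν, Measure.prod_prod, measure_univ, mul_one]
        calc (∫⁻ z, ν {p | linSgn (dot p.1 z.1) ≠ z.2 ∧ linSgn (dot p.2 z.1) ≠ z.2} ∂(PT[|Aᶜ]))
            ≤ ∫⁻ z, gaussPi w {v | linSgn (dot v z.1) ≠ z.2} ∂(PT[|Aᶜ]) := lintegral_mono hEG
        _ = ((PT[|Aᶜ]).prod (gaussPi w))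
              {q : ((Fin d → ℝ) × Bool) × (Fin d → ℝ) | linSgn (dot q.2 q.1.1) ≠ q.1.2} :=
            (Measure.prod_apply measurableSet_SWcond).symm
        _ = ∫⁻ v, (PT[|Aᶜ]) {z | linSgn (dot v z.1) ≠ z.2} ∂(gaussPi w) :=
            Measure.prod_apply_symm measurableSet_SWcond
        _ ≤ ∫⁻ _, ENNReal.ofReal M ∂(gaussPi w) := by
            apply lintegral_mono
            intro v
            show (PT[|Aᶜ]) {z | linSgn (dot v z.1) ≠ z.2} ≤ ENNReal.ofReal M
            calc (PT[|Aᶜ]) {z | linSgn (dot v z.1) ≠ z.2}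
                = ENNReal.ofReal (((PT[|Aᶜ]) {z | linSgn (dot v z.1) ≠ z.2}).toReal) :=
                  (ENNReal.ofReal_toReal (measure_ne_top _ _)).symm
            _ ≤ ENNReal.ofReal M := ENNReal.ofReal_le_ofReal (le_ciSup hMbdd v)
        _ = ENNReal.ofReal M := by simp
      calc 2 * (∫⁻ z in Aᶜ, ν {p | linSgn (dot p.1 z.1) ≠ z.2 ∧ linSgn (dot p.2 z.1) ≠ z.2} ∂PT)
          = 2 * (PT Aᶜ * ∫⁻ z, ν {p | linSgn (dot p.1 z.1) ≠ z.2
              ∧ linSgn (dot p.2 z.1) ≠ z.2} ∂(PT[|Aᶜ])) := by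
            rw [hrestrict, lintegral_smul_measure, smul_eq_mul]
      _ ≤ 2 * (PT Aᶜ * ENNReal.ofReal M) := mul_le_mul_right (mul_le_mul_right hcondle _) _
      _ = ENNReal.ofReal (2 * ((PT Aᶜ).toReal * M)) := by
          rw [ENNReal.ofReal_mul (by norm_num : (0:ℝ) ≤ 2),
            ENNReal.ofReal_mul ENNReal.toReal_nonneg,
            ENNReal.ofReal_toReal (measure_ne_top PT _), ENNReal.ofReal_ofNat]
  -- assemble
  calc PT {z | linSgn (dot w z.1) ≠ z.2}
      ≤ (∫⁻ x, ν {p | linSgn (dot p.1 x) ≠ linSgn (dot p.2 x)} ∂(PT.map Prod.fst))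
        + 2 * ∫⁻ z, ν {p | linSgn (dot p.1 z.1) ≠ z.2 ∧ linSgn (dot p.2 z.1) ≠ z.2} ∂PT := key
  _ = (∫⁻ x, ν {p | linSgn (dot p.1 x) ≠ linSgn (dot p.2 x)} ∂(PT.map Prod.fst))
        + (2 * (∫⁻ z in A, ν {p | linSgn (dot p.1 z.1) ≠ z.2 ∧ linSgn (dot p.2 z.1) ≠ z.2} ∂PT)
          + 2 * (∫⁻ z in Aᶜ, ν {p | linSgn (dot p.1 z.1) ≠ z.2 ∧ linSgn (dot p.2 z.1) ≠ z.2} ∂PT)) := by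
      rw [hsplit, mul_add]
  _ ≤ (∫⁻ x, ν {p | linSgn (dot p.1 x) ≠ linSgn (dot p.2 x)} ∂(PT.map Prod.fst))
        + (2 * (essSup ρ PS * ∫⁻ z, ν {p | linSgn (dot p.1 z.1) ≠ z.2
            ∧ linSgn (dot p.2 z.1) ≠ z.2} ∂PS)
          + ENNReal.ofReal (2 * ((PT Aᶜ).toReal *
              ⨆ w' : Fin d → ℝ, ((PT[|Aᶜ]) {z | linSgn (dot w' z.1) ≠ z.2}).toReal))) :=
      add_le_add_right (add_le_add (mul_le_mul_right hAbound 2) hTail) _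
  _ = _ := by rw [← add_assoc, mul_assoc]
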